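/- arXiv:2301.02957 — 9 statements merged into one kernel-verified Lean document; each statement's English description precedes it below -/
import Mathlib

section
/- The functions u(x,y,t) = -(η_x/(f̄ F²)) sin(f̄ t) - (η_y/(f̄ F²))(1 - cos(f̄ t)), v(x,y,t) = (η_x/(f̄ F²))(1 - cos(f̄ t)) - (η_y/(f̄ F²)) sin(f̄ t), and h(x,y,t) = (η_x²/(f̄² F²))(1 - cos(f̄ t)) + η_x x + (η_y²/(f̄² F²))(1 - cos(f̄ t)) + η_y y satisfy the rotating shallow water equations with flat bottom (D = 0): ∂u/∂t = -u ∂u/∂x - v ∂u/∂y - (1/F²) ∂h/∂x + f̄ v, ∂v/∂t = -u ∂v/∂x - v ∂v/∂y - (1/F²) ∂h/∂y - f̄ u, ∂h/∂t = -∂(u h)/∂x - ∂(v h)/∂y, together with the initial conditions u(x,y,0) = v(x,y,0) = 0 and h(x,y,0) = η_x x + η_y y. -/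
open Real

/-- Inertial oscillation solution (Theorem 3.3): the explicit functions satisfy the
rotating shallow water equations with flat bottom and the stated initial conditions. -/
theorem stmt_0 (fbar F ηx ηy : ℝ) (hf : fbar ≠ 0) (hF : F ≠ 0)
    (u v h : ℝ → ℝ → ℝ → ℝ)
    (hu : ∀ x y t, u x y t =
      -(ηx / (fbar * F ^ 2)) * Real.sin (fbar * t)
        - (ηy / (fbar * F ^ 2)) * (1 - Real.cos (fbar * t)))
    (hv : ∀ x y t, v x y t =
      (ηx / (fbar * F ^ 2)) * (1 - Real.cos (fbar * t))
        - (ηy / (fbar * F ^ 2)) * Real.sin (fbar * t))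
    (hh : ∀ x y t, h x y t =
      (ηx ^ 2 / (fbar ^ 2 * F ^ 2)) * (1 - Real.cos (fbar * t)) + ηx * x
        + (ηy ^ 2 / (fbar ^ 2 * F ^ 2)) * (1 - Real.cos (fbar * t)) + ηy * y) :
    (∀ x y t, deriv (fun s => u x y s) t =
      -(u x y t) * deriv (fun a => u a y t) x - v x y t * deriv (fun b => u x b t) y
        - (1 / F ^ 2) * deriv (fun a => h a y t) x + fbar * v x y t) ∧
    (∀ x y t, deriv (fun s => v x y s) t =
      -(u x y t) * deriv (fun a => v a y t) x - v x y t * deriv (fun b => v x b t) y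
        - (1 / F ^ 2) * deriv (fun b => h x b t) y - fbar * u x y t) ∧
    (∀ x y t, deriv (fun s => h x y s) t =
      -(deriv (fun a => u a y t * h a y t) x) - deriv (fun b => v x b t * h x b t) y) ∧
    (∀ x y, u x y 0 = 0 ∧ v x y 0 = 0 ∧ h x y 0 = ηx * x + ηy * y) := by
  have hS : ∀ t : ℝ, HasDerivAt (fun s : ℝ => Real.sin (fbar * s))
      (fbar * Real.cos (fbar * t)) t := by
    intro t
    simpa [mul_comm, Function.comp_def] using
      (Real.hasDerivAt_sin (fbar * t)).comp t ((hasDerivAt_id t).const_mul fbar)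
  have hC : ∀ t : ℝ, HasDerivAt (fun s : ℝ => Real.cos (fbar * s))
      (-(fbar * Real.sin (fbar * t))) t := by
    intro t
    simpa [mul_comm, Function.comp_def] using
      (Real.hasDerivAt_cos (fbar * t)).comp t ((hasDerivAt_id t).const_mul fbar)
  -- time derivative of u
  have hut : ∀ x y t, deriv (fun s => u x y s) t =
      -(ηx / (fbar * F ^ 2)) * (fbar * Real.cos (fbar * t))
        - (ηy / (fbar * F ^ 2)) * (fbar * Real.sin (fbar * t)) := by
    intro x y t
    have : HasDerivAt (fun s => u x y s)
        (-(ηx / (fbar * F ^ 2)) * (fbar * Real.cos (fbar * t))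
          - (ηy / (fbar * F ^ 2)) * (fbar * Real.sin (fbar * t))) t := by
      have h1 := ((hS t).const_mul (-(ηx / (fbar * F ^ 2)))).sub
        (((hasDerivAt_const t (1:ℝ)).sub (hC t)).const_mul (ηy / (fbar * F ^ 2)))
      have he : (fun s => u x y s) = fun s =>
          -(ηx / (fbar * F ^ 2)) * Real.sin (fbar * s)
            - (ηy / (fbar * F ^ 2)) * (1 - Real.cos (fbar * s)) := by
        funext s; exact hu x y s
      rw [he]
      refine h1.congr_deriv ?_
      ring
    exact this.deriv
  have hvt : ∀ x y t, deriv (fun s => v x y s) t =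
      (ηx / (fbar * F ^ 2)) * (fbar * Real.sin (fbar * t))
        - (ηy / (fbar * F ^ 2)) * (fbar * Real.cos (fbar * t)) := by
    intro x y t
    have : HasDerivAt (fun s => v x y s)
        ((ηx / (fbar * F ^ 2)) * (fbar * Real.sin (fbar * t))
          - (ηy / (fbar * F ^ 2)) * (fbar * Real.cos (fbar * t))) t := by
      have h1 := (((hasDerivAt_const t (1:ℝ)).sub (hC t)).const_mul (ηx / (fbar * F ^ 2))).sub
        ((hS t).const_mul (ηy / (fbar * F ^ 2)))
      have he : (fun s => v x y s) = fun s =>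
          (ηx / (fbar * F ^ 2)) * (1 - Real.cos (fbar * s))
            - (ηy / (fbar * F ^ 2)) * Real.sin (fbar * s) := by
        funext s; exact hv x y s
      rw [he]
      refine h1.congr_deriv ?_
      ring
    exact this.deriv
  have hht : ∀ x y t, deriv (fun s => h x y s) t =
      (ηx ^ 2 / (fbar ^ 2 * F ^ 2)) * (fbar * Real.sin (fbar * t))
        + (ηy ^ 2 / (fbar ^ 2 * F ^ 2)) * (fbar * Real.sin (fbar * t)) := by
    intro x y t
    have : HasDerivAt (fun s => h x y s)
        ((ηx ^ 2 / (fbar ^ 2 * F ^ 2)) * (fbar * Real.sin (fbar * t))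
          + (ηy ^ 2 / (fbar ^ 2 * F ^ 2)) * (fbar * Real.sin (fbar * t))) t := by
      have h1 := (((((hasDerivAt_const t (1:ℝ)).sub (hC t)).const_mul
          (ηx ^ 2 / (fbar ^ 2 * F ^ 2))).add (hasDerivAt_const t (ηx * x))).add
          (((hasDerivAt_const t (1:ℝ)).sub (hC t)).const_mul
          (ηy ^ 2 / (fbar ^ 2 * F ^ 2)))).add (hasDerivAt_const t (ηy * y))
      have he : (fun s => h x y s) = fun s =>
          (ηx ^ 2 / (fbar ^ 2 * F ^ 2)) * (1 - Real.cos (fbar * s)) + ηx * x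
            + (ηy ^ 2 / (fbar ^ 2 * F ^ 2)) * (1 - Real.cos (fbar * s)) + ηy * y := by
        funext s; exact hh x y s
      rw [he]
      refine h1.congr_deriv ?_
      ring
    exact this.deriv
  -- spatial derivatives
  have hux : ∀ x y t, deriv (fun a => u a y t) x = 0 := by
    intro x y t
    have he : (fun a => u a y t) = fun _ =>
        -(ηx / (fbar * F ^ 2)) * Real.sin (fbar * t)
          - (ηy / (fbar * F ^ 2)) * (1 - Real.cos (fbar * t)) := by
      funext a; exact hu a y t
    rw [he, deriv_const]
  have huy : ∀ x y t, deriv (fun b => u x b t) y = 0 := by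
    intro x y t
    have he : (fun b => u x b t) = fun _ =>
        -(ηx / (fbar * F ^ 2)) * Real.sin (fbar * t)
          - (ηy / (fbar * F ^ 2)) * (1 - Real.cos (fbar * t)) := by
      funext b; exact hu x b t
    rw [he, deriv_const]
  have hvx : ∀ x y t, deriv (fun a => v a y t) x = 0 := by
    intro x y t
    have he : (fun a => v a y t) = fun _ =>
        (ηx / (fbar * F ^ 2)) * (1 - Real.cos (fbar * t))
          - (ηy / (fbar * F ^ 2)) * Real.sin (fbar * t) := by
      funext a; exact hv a y t
    rw [he, deriv_const]
  have hvy : ∀ x y t, deriv (fun b => v x b t) y = 0 := by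
    intro x y t
    have he : (fun b => v x b t) = fun _ =>
        (ηx / (fbar * F ^ 2)) * (1 - Real.cos (fbar * t))
          - (ηy / (fbar * F ^ 2)) * Real.sin (fbar * t) := by
      funext b; exact hv x b t
    rw [he, deriv_const]
  have hhx : ∀ x y t, deriv (fun a => h a y t) x = ηx := by
    intro x y t
    have : HasDerivAt (fun a => h a y t) ηx x := by
      have h1 := (((hasDerivAt_const x
          ((ηx ^ 2 / (fbar ^ 2 * F ^ 2)) * (1 - Real.cos (fbar * t)))).add
          ((hasDerivAt_id x).const_mul ηx)).add (hasDerivAt_const x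
          ((ηy ^ 2 / (fbar ^ 2 * F ^ 2)) * (1 - Real.cos (fbar * t))))).add
          (hasDerivAt_const x (ηy * y))
      have he : (fun a => h a y t) = fun a =>
          (ηx ^ 2 / (fbar ^ 2 * F ^ 2)) * (1 - Real.cos (fbar * t)) + ηx * a
            + (ηy ^ 2 / (fbar ^ 2 * F ^ 2)) * (1 - Real.cos (fbar * t)) + ηy * y := by
        funext a; exact hh a y t
      rw [he]
      exact h1.congr_deriv (by simp)
    exact this.deriv
  have hhy : ∀ x y t, deriv (fun b => h x b t) y = ηy := by
    intro x y t
    have : HasDerivAt (fun b => h x b t) ηy y := by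
      have h1 := (((hasDerivAt_const y
          ((ηx ^ 2 / (fbar ^ 2 * F ^ 2)) * (1 - Real.cos (fbar * t)) + ηx * x
            + (ηy ^ 2 / (fbar ^ 2 * F ^ 2)) * (1 - Real.cos (fbar * t))))).add
          ((hasDerivAt_id y).const_mul ηy))
      have he : (fun b => h x b t) = fun b =>
          ((ηx ^ 2 / (fbar ^ 2 * F ^ 2)) * (1 - Real.cos (fbar * t)) + ηx * x
            + (ηy ^ 2 / (fbar ^ 2 * F ^ 2)) * (1 - Real.cos (fbar * t))) + ηy * b := by
        funext b; rw [hh x b t]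
      rw [he]
      exact h1.congr_deriv (by simp)
    exact this.deriv
  -- derivative of products for mass equation
  have huhx : ∀ x y t, deriv (fun a => u a y t * h a y t) x = u x y t * ηx := by
    intro x y t
    have hud : HasDerivAt (fun a => u a y t) 0 x := by
      have he : (fun a => u a y t) = fun _ => u x y t := by
        funext a; rw [hu a y t, hu x y t]
      rw [he]; exact hasDerivAt_const x _
    have hhd : HasDerivAt (fun a => h a y t) ηx x := by
      have := hhx x y t
      have hd : DifferentiableAt ℝ (fun a => h a y t) x := by
        have he : (fun a => h a y t) = fun a =>
            (ηx ^ 2 / (fbar ^ 2 * F ^ 2)) * (1 - Real.cos (fbar * t)) + ηx * a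
              + (ηy ^ 2 / (fbar ^ 2 * F ^ 2)) * (1 - Real.cos (fbar * t)) + ηy * y := by
          funext a; exact hh a y t
        rw [he]; fun_prop
      simpa [this] using hd.hasDerivAt
    have := (hud.mul hhd)
    simpa [Pi.mul_def] using this.deriv
  have hvhy : ∀ x y t, deriv (fun b => v x b t * h x b t) y = v x y t * ηy := by
    intro x y t
    have hvd : HasDerivAt (fun b => v x b t) 0 y := by
      have he : (fun b => v x b t) = fun _ => v x y t := by
        funext b; rw [hv x b t, hv x y t]
      rw [he]; exact hasDerivAt_const y _
    have hhd : HasDerivAt (fun b => h x b t) ηy y := by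
      have := hhy x y t
      have hd : DifferentiableAt ℝ (fun b => h x b t) y := by
        have he : (fun b => h x b t) = fun b =>
            (ηx ^ 2 / (fbar ^ 2 * F ^ 2)) * (1 - Real.cos (fbar * t)) + ηx * x
              + (ηy ^ 2 / (fbar ^ 2 * F ^ 2)) * (1 - Real.cos (fbar * t)) + ηy * b := by
          funext b; exact hh x b t
        rw [he]; fun_prop
      simpa [this] using hd.hasDerivAt
    have := (hvd.mul hhd)
    simpa [Pi.mul_def] using this.deriv
  refine ⟨?_, ?_, ?_, ?_⟩
  · intro x y t
    rw [hut, hux, huy, hhx, hu x y t, hv x y t]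
    field_simp
    ring
  · intro x y t
    rw [hvt, hvx, hvy, hhy, hu x y t, hv x y t]
    field_simp
    ring
  · intro x y t
    rw [hht, huhx, hvhy, hu x y t, hv x y t]
    field_simp
    ring
  · intro x y
    refine ⟨?_, ?_, ?_⟩
    · simp [hu x y 0]
    · simp [hv x y 0]
    · simp [hh x y 0]
end

section
/- The functions u(x,y,t) = -(η_x/(f̄ F²)) sin(f̄ t), v(x,y,t) = (η_x/(f̄ F²))(1 - cos(f̄ t)), h(x,y,t) = (η_x²/(f̄² F²))(1 - cos(f̄ t)) + η_x x satisfy the rotating shallow water equations with flat bottom topography and initial conditions u(x,y,0) = v(x,y,0) = 0, h(x,y,0) = η_x x. -/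
open Real

/-- Corollary 3.4(i): one-sided inertial oscillation solution satisfies the rotating
shallow water equations with flat bottom and the stated initial conditions. -/
theorem stmt_1 (fbar F ηx : ℝ) (hf : fbar ≠ 0) (hF : F ≠ 0)
    (u v h : ℝ → ℝ → ℝ → ℝ)
    (hu : ∀ x y t, u x y t = -(ηx / (fbar * F ^ 2)) * Real.sin (fbar * t))
    (hv : ∀ x y t, v x y t = (ηx / (fbar * F ^ 2)) * (1 - Real.cos (fbar * t)))
    (hh : ∀ x y t, h x y t =
      (ηx ^ 2 / (fbar ^ 2 * F ^ 2)) * (1 - Real.cos (fbar * t)) + ηx * x) :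
    (∀ x y t, deriv (fun s => u x y s) t =
      -(u x y t) * deriv (fun a => u a y t) x - v x y t * deriv (fun b => u x b t) y
        - (1 / F ^ 2) * deriv (fun a => h a y t) x + fbar * v x y t) ∧
    (∀ x y t, deriv (fun s => v x y s) t =
      -(u x y t) * deriv (fun a => v a y t) x - v x y t * deriv (fun b => v x b t) y
        - (1 / F ^ 2) * deriv (fun b => h x b t) y - fbar * u x y t) ∧
    (∀ x y t, deriv (fun s => h x y s) t =
      -(deriv (fun a => u a y t * h a y t) x) - deriv (fun b => v x b t * h x b t) y) ∧
    (∀ x y, u x y 0 = 0 ∧ v x y 0 = 0 ∧ h x y 0 = ηx * x) := by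
  have hsin : ∀ t : ℝ, HasDerivAt (fun s : ℝ => Real.sin (fbar * s))
      (fbar * Real.cos (fbar * t)) t := fun t => by
    exact ((Real.hasDerivAt_sin (fbar * t)).comp t
      ((hasDerivAt_id t).const_mul fbar)).congr_deriv (by ring)
  have hcos : ∀ t : ℝ, HasDerivAt (fun s : ℝ => Real.cos (fbar * s))
      (-(fbar * Real.sin (fbar * t))) t := fun t => by
    exact ((Real.hasDerivAt_cos (fbar * t)).comp t
      ((hasDerivAt_id t).const_mul fbar)).congr_deriv (by ring)
  refine ⟨?_, ?_, ?_, ?_⟩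
  · intro x y t
    have h1 : deriv (fun s => u x y s) t
        = -(ηx / (fbar * F ^ 2)) * (fbar * Real.cos (fbar * t)) := by
      simp only [hu]
      exact ((hsin t).const_mul _).deriv
    have h2 : deriv (fun a => u a y t) x = 0 := by simp only [hu]; simp
    have h3 : deriv (fun b => u x b t) y = 0 := by simp only [hu]; simp
    have h4 : deriv (fun a => h a y t) x = ηx := by
      simp only [hh]
      have hlin : HasDerivAt (fun a : ℝ =>
          (ηx ^ 2 / (fbar ^ 2 * F ^ 2)) * (1 - Real.cos (fbar * t)) + ηx * a) (0 + ηx * 1) x :=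
        (hasDerivAt_const x _).add ((hasDerivAt_id x).const_mul ηx)
      simpa using hlin.deriv
    rw [h1, h2, h3, h4, hu, hv]
    field_simp
    ring
  · intro x y t
    have h1 : deriv (fun s => v x y s) t
        = (ηx / (fbar * F ^ 2)) * (fbar * Real.sin (fbar * t)) := by
      simp only [hv]
      have : HasDerivAt (fun s : ℝ => 1 - Real.cos (fbar * s)) (fbar * Real.sin (fbar * t)) t := by
        exact ((hasDerivAt_const t (1:ℝ)).sub (hcos t)).congr_deriv (by ring)
      exact (this.const_mul _).deriv
    have h2 : deriv (fun a => v a y t) x = 0 := by simp only [hv]; simp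
    have h3 : deriv (fun b => v x b t) y = 0 := by simp only [hv]; simp
    have h4 : deriv (fun b => h x b t) y = 0 := by simp only [hh]; simp
    rw [h1, h2, h3, h4, hu, hv]
    field_simp
    ring
  · intro x y t
    have h1 : deriv (fun s => h x y s) t
        = (ηx ^ 2 / (fbar ^ 2 * F ^ 2)) * (fbar * Real.sin (fbar * t)) := by
      simp only [hh]
      have : HasDerivAt (fun s : ℝ => 1 - Real.cos (fbar * s)) (fbar * Real.sin (fbar * t)) t := by
        exact ((hasDerivAt_const t (1:ℝ)).sub (hcos t)).congr_deriv (by ring)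
      exact ((this.const_mul (ηx ^ 2 / (fbar ^ 2 * F ^ 2))).add (hasDerivAt_const t (ηx * x))).deriv.trans
        (by ring)
    have h2 : deriv (fun a => u a y t * h a y t) x
        = -(ηx / (fbar * F ^ 2)) * Real.sin (fbar * t) * ηx := by
      have heq : (fun a => u a y t * h a y t) = (fun a =>
          -(ηx / (fbar * F ^ 2)) * Real.sin (fbar * t) *
            ((ηx ^ 2 / (fbar ^ 2 * F ^ 2)) * (1 - Real.cos (fbar * t)) + ηx * a)) :=
        funext fun a => by rw [hu, hh]
      rw [heq]
      have : HasDerivAt (fun a : ℝ =>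
          -(ηx / (fbar * F ^ 2)) * Real.sin (fbar * t) *
            ((ηx ^ 2 / (fbar ^ 2 * F ^ 2)) * (1 - Real.cos (fbar * t)) + ηx * a))
          (-(ηx / (fbar * F ^ 2)) * Real.sin (fbar * t) * ηx) x := by
        have hlin : HasDerivAt (fun a : ℝ =>
            (ηx ^ 2 / (fbar ^ 2 * F ^ 2)) * (1 - Real.cos (fbar * t)) + ηx * a) ηx x := by
          exact ((hasDerivAt_const x ((ηx ^ 2 / (fbar ^ 2 * F ^ 2)) * (1 - Real.cos (fbar * t)))).add
            ((hasDerivAt_id x).const_mul ηx)).congr_deriv (by ring)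
        exact hlin.const_mul _
      exact this.deriv
    have h3 : deriv (fun b => v x b t * h x b t) y = 0 := by
      simp only [hv, hh]; simp
    rw [h1, h2, h3]
    field_simp
    ring
  · intro x y
    refine ⟨by simp [hu], by simp [hv], by simp [hh]⟩
end

section
/- For t ∈ [0, π/(2f̄)), the functions u(x,y,t) = f̄ y, v(x,y,t) = -f̄ y tan(f̄ t), h(x,y,t) = h₀ sec(f̄ t) satisfy the rotating shallow water equations over a flat bottom with constant Coriolis parameter f̄ > 0, together with the initial conditions u(x,y,0) = f̄ y, v(x,y,0) = 0, h(x,y,0) = h₀. -/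
open Real

/-- Theorem 3.9(i): anticyclonic vortex with finite escape time, Condition IV. -/
theorem stmt_2 (fbar F h₀ : ℝ) (hf : 0 < fbar) (hF : F ≠ 0)
    (u v h : ℝ → ℝ → ℝ → ℝ)
    (hu : ∀ x y t, u x y t = fbar * y)
    (hv : ∀ x y t, v x y t = -(fbar * y) * Real.tan (fbar * t))
    (hh : ∀ x y t, h x y t = h₀ * (1 / Real.cos (fbar * t))) :
    (∀ x y, ∀ t ∈ Set.Ico (0 : ℝ) (Real.pi / (2 * fbar)),
      deriv (fun s => u x y s) t =
        -(u x y t) * deriv (fun a => u a y t) x - v x y t * deriv (fun b => u x b t) y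
          - (1 / F ^ 2) * deriv (fun a => h a y t) x + fbar * v x y t) ∧
    (∀ x y, ∀ t ∈ Set.Ico (0 : ℝ) (Real.pi / (2 * fbar)),
      deriv (fun s => v x y s) t =
        -(u x y t) * deriv (fun a => v a y t) x - v x y t * deriv (fun b => v x b t) y
          - (1 / F ^ 2) * deriv (fun b => h x b t) y - fbar * u x y t) ∧
    (∀ x y, ∀ t ∈ Set.Ico (0 : ℝ) (Real.pi / (2 * fbar)),
      deriv (fun s => h x y s) t =
        -(deriv (fun a => u a y t * h a y t) x) - deriv (fun b => v x b t * h x b t) y) ∧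
    (∀ x y, u x y 0 = fbar * y ∧ v x y 0 = 0 ∧ h x y 0 = h₀) := by
  have hcos : ∀ t ∈ Set.Ico (0 : ℝ) (Real.pi / (2 * fbar)), 0 < Real.cos (fbar * t) := by
    intro t ht
    apply Real.cos_pos_of_mem_Ioo
    constructor
    · nlinarith [Real.pi_pos, ht.1]
    · have := ht.2
      have h2 : fbar * t < fbar * (Real.pi / (2 * fbar)) := by
        exact mul_lt_mul_of_pos_left this hf
      calc fbar * t < fbar * (Real.pi / (2 * fbar)) := h2
        _ = Real.pi / 2 := by field_simp
  refine ⟨?_, ?_, ?_, ?_⟩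
  · intro x y t ht
    simp only [hu, hv, hh]
    have hdb : deriv (fun b : ℝ => fbar * b) y = fbar := by
      simpa using ((hasDerivAt_id y).const_mul fbar).deriv
    simp only [deriv_const]
    rw [hdb]
    ring
  · intro x y t ht
    have hc := (hcos t ht).ne'
    simp only [hu, hv, hh]
    have hdt : HasDerivAt (fun s => -(fbar * y) * Real.tan (fbar * s))
        (-(fbar * y) * (1 / Real.cos (fbar * t) ^ 2 * fbar)) t := by
      have h1 : HasDerivAt (fun s => fbar * s) fbar t := by
        simpa using (hasDerivAt_id t).const_mul fbar
      exact ((Real.hasDerivAt_tan hc).comp t h1).const_mul _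
    have hdy : deriv (fun b : ℝ => -(fbar * b) * Real.tan (fbar * t)) y
        = -fbar * Real.tan (fbar * t) := by
      have : HasDerivAt (fun b : ℝ => -(fbar * b) * Real.tan (fbar * t))
          (-fbar * Real.tan (fbar * t)) y := by
        have h1 : HasDerivAt (fun b : ℝ => -(fbar * b)) (-fbar) y := by
          exact (((hasDerivAt_id y).const_mul fbar).neg).congr_deriv (by ring)
        simpa using h1.mul_const (Real.tan (fbar * t))
      exact this.deriv
    rw [hdt.deriv, hdy, deriv_const]
    have hts : Real.tan (fbar * t) ^ 2 + 1 = 1 / Real.cos (fbar * t) ^ 2 := by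
      rw [Real.tan_eq_sin_div_cos]
      field_simp
      exact Real.sin_sq_add_cos_sq _
    rw [← hts]
    simp only [deriv_const']
    ring
  · intro x y t ht
    have hc := (hcos t ht).ne'
    simp only [hu, hv, hh]
    have hdt : HasDerivAt (fun s => h₀ * (1 / Real.cos (fbar * s)))
        (h₀ * (fbar * Real.sin (fbar * t) / Real.cos (fbar * t) ^ 2)) t := by
      have h1 : HasDerivAt (fun s => fbar * s) fbar t := by
        simpa using (hasDerivAt_id t).const_mul fbar
      have h2 : HasDerivAt (fun s => Real.cos (fbar * s)) (-Real.sin (fbar * t) * fbar) t :=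
        (Real.hasDerivAt_cos (fbar * t)).comp t h1
      have h3 := (h2.inv hc).const_mul h₀
      simp only [one_div]
      exact h3.congr_deriv (by ring)
    have hdx : deriv (fun _ : ℝ => fbar * y * (h₀ * (1 / Real.cos (fbar * t)))) x = 0 :=
      deriv_const _ _
    have hdy : deriv (fun b : ℝ => -(fbar * b) * Real.tan (fbar * t) * (h₀ * (1 / Real.cos (fbar * t)))) y
        = -fbar * Real.tan (fbar * t) * (h₀ * (1 / Real.cos (fbar * t))) := by
      have h1 : HasDerivAt (fun b : ℝ => -(fbar * b)) (-fbar) y := by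
        exact (((hasDerivAt_id y).const_mul fbar).neg).congr_deriv (by ring)
      have h2 : HasDerivAt
          (fun b : ℝ => -(fbar * b) * Real.tan (fbar * t) * (h₀ * (1 / Real.cos (fbar * t))))
          (-fbar * Real.tan (fbar * t) * (h₀ * (1 / Real.cos (fbar * t)))) y := by
        simpa [mul_assoc] using
          h1.mul_const (Real.tan (fbar * t) * (h₀ * (1 / Real.cos (fbar * t))))
      exact h2.deriv
    rw [hdt.deriv, hdx, hdy, Real.tan_eq_sin_div_cos]
    field_simp
    ring
  · intro x y
    simp [hu, hv, hh]
end

section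
/- For t ∈ [0, π/(2f̄)), the functions u(x,y,t) = -f̄ x tan(f̄ t), v(x,y,t) = -f̄ x, h(x,y,t) = h₀ sec(f̄ t) satisfy the rotating shallow water equations over a flat bottom with constant Coriolis parameter f̄ > 0, with initial conditions u(x,y,0) = 0, v(x,y,0) = -f̄ x, h(x,y,0) = h₀. -/
open Real

lemma cos_pos_aux (fbar t : ℝ) (hf : 0 < fbar) (ht0 : 0 ≤ t)
    (ht1 : t < Real.pi / (2 * fbar)) : 0 < Real.cos (fbar * t) := by
  apply Real.cos_pos_of_mem_Ioo
  constructor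
  · have := Real.pi_pos
    have := mul_nonneg hf.le ht0
    linarith
  · have : fbar * t < fbar * (Real.pi / (2 * fbar)) := by
      exact mul_lt_mul_of_pos_left ht1 hf
    calc fbar * t < fbar * (Real.pi / (2 * fbar)) := this
      _ = Real.pi / 2 := by field_simp

lemma tan_deriv_aux (fbar t : ℝ) (hc : Real.cos (fbar * t) ≠ 0) :
    HasDerivAt (fun s => Real.tan (fbar * s))
      (1 / Real.cos (fbar * t) ^ 2 * (fbar * 1)) t :=
  (Real.hasDerivAt_tan hc).comp t ((hasDerivAt_id t).const_mul fbar)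

lemma sec_deriv_aux (fbar t : ℝ) (hc : Real.cos (fbar * t) ≠ 0) :
    HasDerivAt (fun s => 1 / Real.cos (fbar * s))
      (-(-Real.sin (fbar * t) * (fbar * 1)) / Real.cos (fbar * t) ^ 2) t := by
  have h1 : HasDerivAt (fun s => Real.cos (fbar * s)) (-Real.sin (fbar * t) * (fbar * 1)) t :=
    (Real.hasDerivAt_cos (fbar * t)).comp t ((hasDerivAt_id t).const_mul fbar)
  refine (h1.inv hc).congr_of_eventuallyEq (Filter.Eventually.of_forall fun s => ?_)
  simp [one_div]

/-- Theorem 3.10(i): anticyclonic vortex with finite escape time, Condition VI. -/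
theorem stmt_3 (fbar F h₀ : ℝ) (hf : 0 < fbar) (hF : F ≠ 0)
    (u v h : ℝ → ℝ → ℝ → ℝ)
    (hu : ∀ x y t, u x y t = -(fbar * x) * Real.tan (fbar * t))
    (hv : ∀ x y t, v x y t = -(fbar * x))
    (hh : ∀ x y t, h x y t = h₀ * (1 / Real.cos (fbar * t))) :
    (∀ x y, ∀ t ∈ Set.Ico (0 : ℝ) (Real.pi / (2 * fbar)),
      deriv (fun s => u x y s) t =
        -(u x y t) * deriv (fun a => u a y t) x - v x y t * deriv (fun b => u x b t) y
          - (1 / F ^ 2) * deriv (fun a => h a y t) x + fbar * v x y t) ∧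
    (∀ x y, ∀ t ∈ Set.Ico (0 : ℝ) (Real.pi / (2 * fbar)),
      deriv (fun s => v x y s) t =
        -(u x y t) * deriv (fun a => v a y t) x - v x y t * deriv (fun b => v x b t) y
          - (1 / F ^ 2) * deriv (fun b => h x b t) y - fbar * u x y t) ∧
    (∀ x y, ∀ t ∈ Set.Ico (0 : ℝ) (Real.pi / (2 * fbar)),
      deriv (fun s => h x y s) t =
        -(deriv (fun a => u a y t * h a y t) x) - deriv (fun b => v x b t * h x b t) y) ∧
    (∀ x y, u x y 0 = 0 ∧ v x y 0 = -(fbar * x) ∧ h x y 0 = h₀) := by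
  refine ⟨?_, ?_, ?_, ?_⟩
  · intro x y t ht
    obtain ⟨ht0, ht1⟩ := ht
    have hc := cos_pos_aux fbar t hf ht0 ht1
    have hc' := hc.ne'
    -- time derivative of u
    have hdu : deriv (fun s => u x y s) t
        = -(fbar * x) * (1 / Real.cos (fbar * t) ^ 2 * (fbar * 1)) := by
      simp only [hu]
      exact ((tan_deriv_aux fbar t hc').const_mul (-(fbar * x))).deriv
    -- x derivative of u
    have hdux : deriv (fun a => u a y t) x = -(fbar * 1) * Real.tan (fbar * t) := by
      simp only [hu]
      exact ((((hasDerivAt_id x).const_mul fbar).neg).mul_const (Real.tan (fbar * t))).deriv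
    have hduy : deriv (fun b => u x b t) y = 0 := by
      simp only [hu]; exact deriv_const y _
    have hdhx : deriv (fun a => h a y t) x = 0 := by
      simp only [hh]; exact deriv_const x _
    rw [hdu, hdux, hduy, hdhx, hu, hv, Real.tan_eq_sin_div_cos]
    have hs := Real.sin_sq_add_cos_sq (fbar * t)
    field_simp
    linear_combination (fbar^2 * x * F^2) * hs
  · intro x y t ht
    obtain ⟨ht0, ht1⟩ := ht
    have hdv : deriv (fun s => v x y s) t = 0 := by
      simp only [hv]; exact deriv_const t _
    have hdvx : deriv (fun a => v a y t) x = -(fbar * 1) := by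
      simp only [hv]
      exact (((hasDerivAt_id x).const_mul fbar).neg).deriv
    have hdvy : deriv (fun b => v x b t) y = 0 := by
      simp only [hv]; exact deriv_const y _
    have hdhy : deriv (fun b => h x b t) y = 0 := by
      simp only [hh]; exact deriv_const y _
    rw [hdv, hdvx, hdvy, hdhy, hu, hv]
    ring
  · intro x y t ht
    obtain ⟨ht0, ht1⟩ := ht
    have hc := cos_pos_aux fbar t hf ht0 ht1
    have hc' := hc.ne'
    have hdh : deriv (fun s => h x y s) t
        = h₀ * (-(-Real.sin (fbar * t) * (fbar * 1)) / Real.cos (fbar * t) ^ 2) := by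
      simp only [hh]
      exact ((sec_deriv_aux fbar t hc').const_mul h₀).deriv
    have hdux : deriv (fun a => u a y t * h a y t) x
        = -(fbar * 1) * Real.tan (fbar * t) * (h₀ * (1 / Real.cos (fbar * t))) := by
      simp only [hu, hh]
      have : HasDerivAt (fun a => -(fbar * a) * Real.tan (fbar * t) *
          (h₀ * (1 / Real.cos (fbar * t))))
          (-(fbar * 1) * Real.tan (fbar * t) * (h₀ * (1 / Real.cos (fbar * t)))) x :=
        ((((hasDerivAt_id x).const_mul fbar).neg).mul_const (Real.tan (fbar * t))).mul_const _
      exact this.deriv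
    have hdvy : deriv (fun b => v x b t * h x b t) y = 0 := by
      simp only [hv, hh]; exact deriv_const y _
    rw [hdh, hdux, hdvy, Real.tan_eq_sin_div_cos]
    field_simp
    ring
  · intro x y
    refine ⟨?_, ?_, ?_⟩
    · rw [hu]; simp
    · rw [hv]
    · rw [hh]; simp
end

section
/- For t ∈ [0, π/(2f̄)), the functions u(x,y,t) = f̄ y, v(x,y,t) = f̄ y sec(f̄ t) - f̄ y tan(f̄ t) + x·d/dt[sec(f̄ t) - tan(f̄ t)], h(x,y,t) = (h₀/f̄)·d/dt[tan(f̄ t) - sec(f̄ t)] satisfy the rotating shallow water equations over a flat bottom, with initial conditions u(x,y,0) = f̄ y, v(x,y,0) = -f̄ x + f̄ y, h(x,y,0) = h₀. -/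
set_option maxHeartbeats 1000000

open Real

/-- Theorem 3.9(ii): anticyclonic vortex with finite escape time, Condition V.
Here sec θ = 1 / cos θ, d/dt tan(f̄ t) = f̄ sec²(f̄ t) and d/dt sec(f̄ t) = f̄ sec(f̄ t) tan(f̄ t). -/
theorem stmt_4 (fbar F h₀ : ℝ) (hf : 0 < fbar) (hF : F ≠ 0)
    (u v h : ℝ → ℝ → ℝ → ℝ)
    (hu : ∀ x y t, u x y t = fbar * y)
    (hv : ∀ x y t, v x y t =
      fbar * y * (1 / Real.cos (fbar * t)) - fbar * y * Real.tan (fbar * t)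
        + x * (fbar * (1 / Real.cos (fbar * t)) * Real.tan (fbar * t)
                - fbar * (1 / Real.cos (fbar * t)) ^ 2))
    (hh : ∀ x y t, h x y t =
      (h₀ / fbar) * (fbar * (1 / Real.cos (fbar * t)) ^ 2
        - fbar * (1 / Real.cos (fbar * t)) * Real.tan (fbar * t))) :
    (∀ x y, ∀ t ∈ Set.Ico (0 : ℝ) (Real.pi / (2 * fbar)),
      deriv (fun s => u x y s) t =
        -(u x y t) * deriv (fun a => u a y t) x - v x y t * deriv (fun b => u x b t) y
          - (1 / F ^ 2) * deriv (fun a => h a y t) x + fbar * v x y t) ∧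
    (∀ x y, ∀ t ∈ Set.Ico (0 : ℝ) (Real.pi / (2 * fbar)),
      deriv (fun s => v x y s) t =
        -(u x y t) * deriv (fun a => v a y t) x - v x y t * deriv (fun b => v x b t) y
          - (1 / F ^ 2) * deriv (fun b => h x b t) y - fbar * u x y t) ∧
    (∀ x y, ∀ t ∈ Set.Ico (0 : ℝ) (Real.pi / (2 * fbar)),
      deriv (fun s => h x y s) t =
        -(deriv (fun a => u a y t * h a y t) x) - deriv (fun b => v x b t * h x b t) y) ∧
    (∀ x y, u x y 0 = fbar * y ∧ v x y 0 = -(fbar * x) + fbar * y ∧ h x y 0 = h₀) := by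
  have hcos : ∀ t ∈ Set.Ico (0 : ℝ) (Real.pi / (2 * fbar)), Real.cos (fbar * t) ≠ 0 := by
    intro t ht
    have h1 : 0 ≤ fbar * t := mul_nonneg hf.le ht.1
    have h2 : fbar * t < Real.pi / 2 := by
      have h3 := ht.2
      rw [lt_div_iff₀ (by positivity : (0:ℝ) < 2*fbar)] at h3
      nlinarith
    have : 0 < Real.cos (fbar * t) :=
      Real.cos_pos_of_mem_Ioo ⟨by linarith [Real.pi_pos], h2⟩
    linarith
  have hlin : ∀ t : ℝ, HasDerivAt (fun s : ℝ => fbar * s) fbar t := fun t => by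
    simpa using (hasDerivAt_id t).const_mul fbar
  have htan : ∀ t ∈ Set.Ico (0 : ℝ) (Real.pi / (2 * fbar)),
      HasDerivAt (fun s => Real.tan (fbar * s)) (1 / Real.cos (fbar * t) ^ 2 * fbar) t := by
    intro t ht
    exact (Real.hasDerivAt_tan (hcos t ht)).comp t (hlin t)
  have hsec : ∀ t ∈ Set.Ico (0 : ℝ) (Real.pi / (2 * fbar)),
      HasDerivAt (fun s => 1 / Real.cos (fbar * s))
        (Real.sin (fbar * t) / Real.cos (fbar * t) ^ 2 * fbar) t := by
    intro t ht
    have h1 : HasDerivAt (fun z => 1 / Real.cos z)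
        (Real.sin (fbar * t) / Real.cos (fbar * t) ^ 2) (fbar * t) := by
      have := (Real.hasDerivAt_cos (fbar * t)).inv (hcos t ht)
      simp only [one_div]
      refine this.congr_deriv ?_
      field_simp
    exact h1.comp t (hlin t)
  refine ⟨?_, ?_, ?_, ?_⟩
  · -- u equation
    intro x y t ht
    have d1 : deriv (fun s => u x y s) t = 0 := by simp only [hu]; exact deriv_const _ _
    have d2 : deriv (fun a => u a y t) x = 0 := by simp only [hu]; exact deriv_const _ _
    have d3 : deriv (fun b => u x b t) y = fbar := by
      simp only [hu]; simpa using ((hasDerivAt_id y).const_mul fbar).deriv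
    have d4 : deriv (fun a => h a y t) x = 0 := by simp only [hh]; exact deriv_const _ _
    rw [d1, d2, d3, d4]
    ring
  · -- v equation
    intro x y t ht
    have hcne : Real.cos (fbar * t) ≠ 0 := hcos t ht
    have hdv : HasDerivAt (fun s => fbar * y * (1 / Real.cos (fbar * s))
        - fbar * y * Real.tan (fbar * s)
        + x * (fbar * (1 / Real.cos (fbar * s)) * Real.tan (fbar * s)
              - fbar * (1 / Real.cos (fbar * s)) ^ 2))
        (fbar * y * (Real.sin (fbar*t) / Real.cos (fbar*t) ^ 2 * fbar)
         - fbar * y * (1 / Real.cos (fbar*t) ^ 2 * fbar)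
         + x * (fbar * (Real.sin (fbar*t) / Real.cos (fbar*t) ^ 2 * fbar) * Real.tan (fbar*t)
                + fbar * (1 / Real.cos (fbar*t)) * (1 / Real.cos (fbar*t) ^ 2 * fbar)
                - fbar * (2 * (1 / Real.cos (fbar*t))
                    * (Real.sin (fbar*t) / Real.cos (fbar*t) ^ 2 * fbar)))) t := by
      have H := (((hsec t ht).const_mul (fbar*y)).sub ((htan t ht).const_mul (fbar*y))).add
        (((((hsec t ht).const_mul fbar).mul (htan t ht)).sub
          (((hsec t ht).pow 2).const_mul fbar)).const_mul x)
      refine H.congr_deriv ?_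
      push_cast
      ring
    have d0 := hdv.deriv
    have dvx : deriv (fun a => v a y t) x =
        fbar * (1 / Real.cos (fbar*t)) * Real.tan (fbar*t)
          - fbar * (1 / Real.cos (fbar*t)) ^ 2 := by
      simp only [hv]
      have H := (((hasDerivAt_id x).mul_const
          (fbar * (1 / Real.cos (fbar*t)) * Real.tan (fbar*t)
            - fbar * (1 / Real.cos (fbar*t)) ^ 2)).const_add
          (fbar * y * (1 / Real.cos (fbar*t)) - fbar * y * Real.tan (fbar*t)))
      simpa using H.deriv
    have dvy : deriv (fun b => v x b t) y
        = fbar * (1/Real.cos (fbar*t)) - fbar * Real.tan (fbar*t) := by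
      simp only [hv]
      have H := ((((hasDerivAt_id y).const_mul fbar).mul_const (1/Real.cos (fbar*t))).sub
        (((hasDerivAt_id y).const_mul fbar).mul_const (Real.tan (fbar*t)))).add_const
        (x * (fbar * (1 / Real.cos (fbar*t)) * Real.tan (fbar*t)
            - fbar * (1 / Real.cos (fbar*t)) ^ 2))
      simpa using H.deriv
    have dhy : deriv (fun b => h x b t) y = 0 := by simp only [hh]; exact deriv_const _ _
    rw [dvx, dvy, dhy]
    simp only [hu, hv]
    rw [d0]
    rw [Real.tan_eq_sin_div_cos]
    have hsc := Real.sin_sq_add_cos_sq (fbar*t)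
    field_simp
    linear_combination (fbar^2 * y * Real.cos (fbar*t) * F^2) * hsc
  · -- h equation
    intro x y t ht
    have hcne : Real.cos (fbar * t) ≠ 0 := hcos t ht
    have hdh : HasDerivAt (fun s => (h₀ / fbar) * (fbar * (1 / Real.cos (fbar * s)) ^ 2
          - fbar * (1 / Real.cos (fbar * s)) * Real.tan (fbar * s)))
        ((h₀ / fbar) * (fbar * (2 * (1 / Real.cos (fbar*t))
              * (Real.sin (fbar*t) / Real.cos (fbar*t) ^ 2 * fbar))
          - (fbar * (Real.sin (fbar*t) / Real.cos (fbar*t) ^ 2 * fbar) * Real.tan (fbar*t)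
             + fbar * (1 / Real.cos (fbar*t)) * (1 / Real.cos (fbar*t) ^ 2 * fbar)))) t := by
      have H := ((((hsec t ht).pow 2).const_mul fbar).sub
        (((hsec t ht).const_mul fbar).mul (htan t ht))).const_mul (h₀ / fbar)
      refine H.congr_deriv ?_
      push_cast
      ring
    have d0 := hdh.deriv
    have dux : deriv (fun a => u a y t * h a y t) x = 0 := by
      simp only [hu, hh]; exact deriv_const _ _
    have dvh : deriv (fun b => v x b t * h x b t) y
        = (fbar * (1/Real.cos (fbar*t)) - fbar * Real.tan (fbar*t))
            * ((h₀ / fbar) * (fbar * (1 / Real.cos (fbar * t)) ^ 2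
              - fbar * (1 / Real.cos (fbar * t)) * Real.tan (fbar * t))) := by
      simp only [hv, hh]
      have H := (((((hasDerivAt_id y).const_mul fbar).mul_const (1/Real.cos (fbar*t))).sub
        (((hasDerivAt_id y).const_mul fbar).mul_const (Real.tan (fbar*t)))).add_const
        (x * (fbar * (1 / Real.cos (fbar*t)) * Real.tan (fbar*t)
            - fbar * (1 / Real.cos (fbar*t)) ^ 2))).mul_const
        ((h₀ / fbar) * (fbar * (1 / Real.cos (fbar * t)) ^ 2
          - fbar * (1 / Real.cos (fbar * t)) * Real.tan (fbar * t)))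
      simpa using H.deriv
    rw [dux, dvh]
    simp only [hh]
    rw [d0]
    rw [Real.tan_eq_sin_div_cos]
    have hsc := Real.sin_sq_add_cos_sq (fbar*t)
    field_simp
    ring_nf
  · -- initial conditions
    intro x y
    refine ⟨by simp [hu], ?_, ?_⟩
    · rw [hv]; simp [Real.tan_zero]; ring
    · rw [hh]; simp [Real.tan_zero]; field_simp
end

section
/- For t ∈ [0, π/(2f̄)), the functions u(x,y,t) = f̄ x sec(f̄ t) - f̄ x tan(f̄ t) + y·d/dt[tan(f̄ t) - sec(f̄ t)], v(x,y,t) = -f̄ x, h(x,y,t) = (h₀/f̄)·d/dt[tan(f̄ t) - sec(f̄ t)] satisfy the rotating shallow water equations over a flat bottom, with initial conditions u(x,y,0) = f̄ x + f̄ y, v(x,y,0) = -f̄ x, h(x,y,0) = h₀. -/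
open Real

lemma secHD (fbar t : ℝ) (hc : Real.cos (fbar*t) ≠ 0) :
    HasDerivAt (fun s => 1 / Real.cos (fbar*s)) (fbar * Real.sin (fbar*t) / Real.cos (fbar*t)^2) t := by
  have h0 : HasDerivAt (fun s => fbar * s) fbar t := by
    simpa using (hasDerivAt_id t).const_mul fbar
  have h1 : HasDerivAt (fun s => Real.cos (fbar*s)) (-Real.sin (fbar*t) * fbar) t :=
    (Real.hasDerivAt_cos (fbar*t)).comp t h0
  have h2 := h1.inv hc
  simp only [one_div]
  refine h2.congr_deriv ?_
  ring

lemma tanHD (fbar t : ℝ) (hc : Real.cos (fbar*t) ≠ 0) :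
    HasDerivAt (fun s => Real.tan (fbar*s)) (fbar / Real.cos (fbar*t)^2) t := by
  have h0 : HasDerivAt (fun s => fbar * s) fbar t := by
    simpa using (hasDerivAt_id t).const_mul fbar
  have h1 := (Real.hasDerivAt_tan hc).comp t h0
  refine h1.congr_deriv ?_
  ring

/-- Theorem 3.10(ii): anticyclonic vortex with finite escape time, Condition VII.
Here sec θ = 1 / cos θ, d/dt tan(f̄ t) = f̄ sec²(f̄ t) and d/dt sec(f̄ t) = f̄ sec(f̄ t) tan(f̄ t). -/
theorem stmt_5 (fbar F h₀ : ℝ) (hf : 0 < fbar) (hF : F ≠ 0)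
    (u v h : ℝ → ℝ → ℝ → ℝ)
    (hu : ∀ x y t, u x y t =
      fbar * x * (1 / Real.cos (fbar * t)) - fbar * x * Real.tan (fbar * t)
        + y * (fbar * (1 / Real.cos (fbar * t)) ^ 2
                - fbar * (1 / Real.cos (fbar * t)) * Real.tan (fbar * t)))
    (hv : ∀ x y t, v x y t = -(fbar * x))
    (hh : ∀ x y t, h x y t =
      (h₀ / fbar) * (fbar * (1 / Real.cos (fbar * t)) ^ 2
        - fbar * (1 / Real.cos (fbar * t)) * Real.tan (fbar * t))) :
    (∀ x y, ∀ t ∈ Set.Ico (0 : ℝ) (Real.pi / (2 * fbar)),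
      deriv (fun s => u x y s) t =
        -(u x y t) * deriv (fun a => u a y t) x - v x y t * deriv (fun b => u x b t) y
          - (1 / F ^ 2) * deriv (fun a => h a y t) x + fbar * v x y t) ∧
    (∀ x y, ∀ t ∈ Set.Ico (0 : ℝ) (Real.pi / (2 * fbar)),
      deriv (fun s => v x y s) t =
        -(u x y t) * deriv (fun a => v a y t) x - v x y t * deriv (fun b => v x b t) y
          - (1 / F ^ 2) * deriv (fun b => h x b t) y - fbar * u x y t) ∧
    (∀ x y, ∀ t ∈ Set.Ico (0 : ℝ) (Real.pi / (2 * fbar)),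
      deriv (fun s => h x y s) t =
        -(deriv (fun a => u a y t * h a y t) x) - deriv (fun b => v x b t * h x b t) y) ∧
    (∀ x y, u x y 0 = fbar * x + fbar * y ∧ v x y 0 = -(fbar * x) ∧ h x y 0 = h₀) := by
  have hfne : fbar ≠ 0 := ne_of_gt hf
  have hcos : ∀ t ∈ Set.Ico (0 : ℝ) (Real.pi / (2 * fbar)), Real.cos (fbar * t) ≠ 0 := by
    intro t ht
    obtain ⟨ht0, ht1⟩ := ht
    have h2 : t * (2 * fbar) < Real.pi := (lt_div_iff₀ (by positivity)).mp ht1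
    have := Real.pi_pos
    exact ne_of_gt (Real.cos_pos_of_mem_Ioo ⟨by nlinarith, by nlinarith⟩)
  refine ⟨?_, ?_, ?_, ?_⟩
  · -- u equation
    intro x y t ht
    have hc := hcos t ht
    have A := secHD fbar t hc
    have B := tanHD fbar t hc
    simp only [hu, hv, hh]
    have Ht := (((A.const_mul (fbar*x)).sub (B.const_mul (fbar*x))).add
      ((((A.pow 2).const_mul fbar).sub ((A.const_mul fbar).mul B)).const_mul y)).deriv
    simp only [Pi.add_def, Pi.sub_def, Pi.mul_def, Pi.pow_def, Pi.neg_def] at Ht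
    rw [Ht]
    have Hx := ((((hasDerivAt_id' x).const_mul fbar).mul_const (1 / Real.cos (fbar*t))).sub
      (((hasDerivAt_id' x).const_mul fbar).mul_const (Real.tan (fbar*t)))).add (hasDerivAt_const x
        (y * (fbar * (1 / Real.cos (fbar * t)) ^ 2 - fbar * (1 / Real.cos (fbar * t)) * Real.tan (fbar * t))))
    simp only [Pi.add_def, Pi.sub_def, Pi.mul_def, Pi.pow_def, Pi.neg_def] at Hx
    rw [Hx.deriv]
    have Hy := (((hasDerivAt_const y (fbar * x * (1 / Real.cos (fbar*t)))).sub
      (hasDerivAt_const y (fbar * x * Real.tan (fbar*t)))).add ((hasDerivAt_id' y).mul_const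
        (fbar * (1 / Real.cos (fbar * t)) ^ 2 - fbar * (1 / Real.cos (fbar * t)) * Real.tan (fbar * t))))
    simp only [Pi.add_def, Pi.sub_def, Pi.mul_def, Pi.pow_def, Pi.neg_def] at Hy
    rw [Hy.deriv, deriv_const]
    rw [Real.tan_eq_sin_div_cos]
    have hsc := Real.sin_sq_add_cos_sq (fbar*t)
    set c := Real.cos (fbar*t) with hcdef
    set sn := Real.sin (fbar*t) with hsdef
    field_simp
    linear_combination (fbar^2*x*c*F^2) * hsc + (2*fbar^2*sn*y*F^2) * mul_inv_cancel₀ hc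
  · -- v equation
    intro x y t ht
    simp only [hu, hv, hh]
    have Hvx := (((hasDerivAt_id' x).const_mul fbar).neg).deriv
    simp only [Pi.add_def, Pi.sub_def, Pi.mul_def, Pi.pow_def, Pi.neg_def] at Hvx
    rw [Hvx, deriv_const, deriv_const, deriv_const]
    ring
  · -- h equation
    intro x y t ht
    have hc := hcos t ht
    have A := secHD fbar t hc
    have B := tanHD fbar t hc
    simp only [hu, hv, hh]
    have Ht := ((((A.pow 2).const_mul fbar).sub ((A.const_mul fbar).mul B)).const_mul (h₀/fbar)).deriv
    simp only [Pi.add_def, Pi.sub_def, Pi.mul_def, Pi.pow_def, Pi.neg_def] at Ht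
    rw [Ht]
    have Hx := (((((hasDerivAt_id' x).const_mul fbar).mul_const (1 / Real.cos (fbar*t))).sub
      (((hasDerivAt_id' x).const_mul fbar).mul_const (Real.tan (fbar*t)))).add (hasDerivAt_const x
        (y * (fbar * (1 / Real.cos (fbar * t)) ^ 2
          - fbar * (1 / Real.cos (fbar * t)) * Real.tan (fbar * t))))).mul_const
        (h₀ / fbar * (fbar * (1 / Real.cos (fbar * t)) ^ 2
          - fbar * (1 / Real.cos (fbar * t)) * Real.tan (fbar * t)))
    simp only [Pi.add_def, Pi.sub_def, Pi.mul_def, Pi.pow_def, Pi.neg_def] at Hx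
    rw [Hx.deriv, deriv_const]
    rw [Real.tan_eq_sin_div_cos]
    have hsc := Real.sin_sq_add_cos_sq (fbar*t)
    set c := Real.cos (fbar*t) with hcdef
    set sn := Real.sin (fbar*t) with hsdef
    field_simp
    linear_combination (2*h₀*fbar*sn) * mul_inv_cancel₀ hc
  · -- initial conditions
    intro x y
    refine ⟨?_, ?_, ?_⟩
    · simp [hu, Real.tan_zero]; ring
    · simp [hv]
    · simp [hh, Real.tan_zero]
      field_simp
end

section
/- If time-dependent coefficients ṽ₀, ṽ_x, ṽ_y, h̃₀ : ℝ → ℝ satisfy the ODE system dṽ₀/dt = -ṽ₀ ṽ_y, dṽ_x/dt = -ṽ_x ṽ_y, dṽ_y/dt = -f̄ ṽ_x - ṽ_y² - f̄², dh̃₀/dt = -h̃₀ ṽ_y, then u(x,y,t) = f̄ y, v(x,y,t) = ṽ₀(t) + ṽ_x(t) x + ṽ_y(t) y, h(x,y,t) = h̃₀(t) satisfy the rotating shallow water equations over a flat bottom (D = 0). -/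
open Real

/-- Theorem 3.7 (reduced system for Conditions IV/V): solutions of the reduced ODE
system give solutions of the rotating shallow water equations over a flat bottom. -/
theorem stmt_7 (fbar F : ℝ) (hF : F ≠ 0)
    (v₀ vx vy h₀ : ℝ → ℝ)
    (hv₀ : Differentiable ℝ v₀) (hvx : Differentiable ℝ vx)
    (hvy : Differentiable ℝ vy) (hh₀ : Differentiable ℝ h₀)
    (ode1 : ∀ t, deriv v₀ t = -(v₀ t) * vy t)
    (ode2 : ∀ t, deriv vx t = -(vx t) * vy t)
    (ode3 : ∀ t, deriv vy t = -fbar * vx t - (vy t) ^ 2 - fbar ^ 2)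
    (ode4 : ∀ t, deriv h₀ t = -(h₀ t) * vy t)
    (u v h : ℝ → ℝ → ℝ → ℝ)
    (hu : ∀ x y t, u x y t = fbar * y)
    (hv : ∀ x y t, v x y t = v₀ t + vx t * x + vy t * y)
    (hh : ∀ x y t, h x y t = h₀ t) :
    (∀ x y t, deriv (fun s => u x y s) t =
      -(u x y t) * deriv (fun a => u a y t) x - v x y t * deriv (fun b => u x b t) y
        - (1 / F ^ 2) * deriv (fun a => h a y t) x + fbar * v x y t) ∧
    (∀ x y t, deriv (fun s => v x y s) t =
      -(u x y t) * deriv (fun a => v a y t) x - v x y t * deriv (fun b => v x b t) y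
        - (1 / F ^ 2) * deriv (fun b => h x b t) y - fbar * u x y t) ∧
    (∀ x y t, deriv (fun s => h x y s) t =
      -(deriv (fun a => u a y t * h a y t) x) - deriv (fun b => v x b t * h x b t) y) := by
  refine ⟨fun x y t => ?_, fun x y t => ?_, fun x y t => ?_⟩ <;>
    simp only [hu, hv, hh]
  · have h1 : deriv (fun _ : ℝ => fbar * y) t = 0 := deriv_const _ _
    have h2 : deriv (fun _ : ℝ => fbar * y) x = 0 := deriv_const _ _
    have h3 : deriv (fun b : ℝ => fbar * b) y = fbar := by
      simpa using (((hasDerivAt_id y).const_mul fbar).deriv)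
    have h4 : deriv (fun _ : ℝ => h₀ t) x = 0 := deriv_const _ _
    rw [h1, h2, h3, h4]; ring
  · have h1 : deriv (fun s => v₀ s + vx s * x + vy s * y) t =
        deriv v₀ t + deriv vx t * x + deriv vy t * y := by
      have := (((hv₀ t).hasDerivAt.add ((hvx t).hasDerivAt.mul_const x)).add
        ((hvy t).hasDerivAt.mul_const y)).deriv
      exact this
    have h2 : deriv (fun a => v₀ t + vx t * a + vy t * y) x = vx t := by
      have := ((((hasDerivAt_id x).const_mul (vx t)).const_add (v₀ t)).add_const
        (vy t * y)).deriv
      simpa using this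
    have h3 : deriv (fun b => v₀ t + vx t * x + vy t * b) y = vy t := by
      have := (((hasDerivAt_id y).const_mul (vy t)).const_add (v₀ t + vx t * x)).deriv
      simpa using this
    have h4 : deriv (fun _ : ℝ => h₀ t) y = 0 := deriv_const _ _
    rw [h1, h2, h3, h4, ode1, ode2, ode3]; ring
  · have h1 : deriv (fun s => h₀ s) t = -(h₀ t) * vy t := ode4 t
    have h2 : deriv (fun _ : ℝ => fbar * y * h₀ t) x = 0 := deriv_const _ _
    have h3 : deriv (fun b => (v₀ t + vx t * x + vy t * b) * h₀ t) y =
        vy t * h₀ t := by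
      have := ((((hasDerivAt_id y).const_mul (vy t)).const_add
        (v₀ t + vx t * x)).mul_const (h₀ t)).deriv
      simpa using this
    rw [h1, h2, h3]; ring
end

section
/- If time-dependent coefficients ũ₀, ũ_x, ũ_y, h̃₀ : ℝ → ℝ satisfy the ODE system dũ₀/dt = -ũ₀ ũ_x, dũ_x/dt = -ũ_x² + f̄ ũ_y - f̄², dũ_y/dt = -ũ_y ũ_x, dh̃₀/dt = -h̃₀ ũ_x, then u(x,y,t) = ũ₀(t) + ũ_x(t) x + ũ_y(t) y, v(x,y,t) = -f̄ x, h(x,y,t) = h̃₀(t) satisfy the rotating shallow water equations over a flat bottom (D = 0). -/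
open Real

/-- Theorem 3.8 (reduced system for Conditions VI/VII): solutions of the reduced ODE
system give solutions of the rotating shallow water equations over a flat bottom. -/
theorem stmt_8 (fbar F : ℝ) (hF : F ≠ 0)
    (u₀ ux uy h₀ : ℝ → ℝ)
    (hu₀ : Differentiable ℝ u₀) (hux : Differentiable ℝ ux)
    (huy : Differentiable ℝ uy) (hh₀ : Differentiable ℝ h₀)
    (ode1 : ∀ t, deriv u₀ t = -(u₀ t) * ux t)
    (ode2 : ∀ t, deriv ux t = -(ux t) ^ 2 + fbar * uy t - fbar ^ 2)
    (ode3 : ∀ t, deriv uy t = -(uy t) * ux t)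
    (ode4 : ∀ t, deriv h₀ t = -(h₀ t) * ux t)
    (u v h : ℝ → ℝ → ℝ → ℝ)
    (hu : ∀ x y t, u x y t = u₀ t + ux t * x + uy t * y)
    (hv : ∀ x y t, v x y t = -(fbar * x))
    (hh : ∀ x y t, h x y t = h₀ t) :
    (∀ x y t, deriv (fun s => u x y s) t =
      -(u x y t) * deriv (fun a => u a y t) x - v x y t * deriv (fun b => u x b t) y
        - (1 / F ^ 2) * deriv (fun a => h a y t) x + fbar * v x y t) ∧
    (∀ x y t, deriv (fun s => v x y s) t =
      -(u x y t) * deriv (fun a => v a y t) x - v x y t * deriv (fun b => v x b t) y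
        - (1 / F ^ 2) * deriv (fun b => h x b t) y - fbar * u x y t) ∧
    (∀ x y t, deriv (fun s => h x y s) t =
      -(deriv (fun a => u a y t * h a y t) x) - deriv (fun b => v x b t * h x b t) y) := by
  refine ⟨fun x y t => ?_, fun x y t => ?_, fun x y t => ?_⟩
  · simp only [hu, hv, hh]
    have h1 : deriv (fun s => u₀ s + ux s * x + uy s * y) t
        = deriv u₀ t + deriv ux t * x + deriv uy t * y :=
      (((hu₀ t).hasDerivAt.add ((hux t).hasDerivAt.mul_const x)).add
        ((huy t).hasDerivAt.mul_const y)).deriv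
    have h2 : deriv (fun a => u₀ t + ux t * a + uy t * y) x = ux t := by
      have : HasDerivAt (fun a : ℝ => u₀ t + ux t * a + uy t * y) (ux t) x := by
        simpa using (((hasDerivAt_id x).const_mul (ux t)).const_add (u₀ t)).add_const (uy t * y)
      exact this.deriv
    have h3 : deriv (fun b => u₀ t + ux t * x + uy t * b) y = uy t := by
      have : HasDerivAt (fun b : ℝ => u₀ t + ux t * x + uy t * b) (uy t) y := by
        simpa using ((hasDerivAt_id y).const_mul (uy t)).const_add (u₀ t + ux t * x)
      exact this.deriv
    rw [h1, h2, h3, ode1, ode2, ode3, deriv_const]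
    ring
  · simp only [hu, hv, hh]
    have h2 : deriv (fun a : ℝ => -(fbar * a)) x = -fbar := by
      have : HasDerivAt (fun a : ℝ => -(fbar * a)) (-fbar) x := by
        simpa [Pi.neg_def] using ((hasDerivAt_id x).const_mul fbar).neg
      exact this.deriv
    rw [h2]
    simp only [deriv_const]
    ring
  · simp only [hu, hv, hh]
    have h1 : deriv (fun a : ℝ => (u₀ t + ux t * a + uy t * y) * h₀ t) x
        = ux t * h₀ t := by
      have : HasDerivAt (fun a : ℝ => (u₀ t + ux t * a + uy t * y) * h₀ t)
          (ux t * h₀ t) x := by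
        have h' : HasDerivAt (fun a : ℝ => u₀ t + ux t * a + uy t * y) (ux t) x := by
          simpa using (((hasDerivAt_id x).const_mul (ux t)).const_add (u₀ t)).add_const (uy t * y)
        exact h'.mul_const (h₀ t)
      exact this.deriv
    rw [h1, ode4, deriv_const]
    ring
end

section
/- On the interval [0, π/(2f̄)), the functions ṽ₀(t) = 0, ṽ_x(t) = 0, ṽ_y(t) = -f̄ tan(f̄ t), h̃₀(t) = h₀ sec(f̄ t) are the solutions of the ODE system dṽ₀/dt = -ṽ₀ ṽ_y, dṽ_x/dt = -ṽ_x ṽ_y, dṽ_y/dt = -f̄ ṽ_x - ṽ_y² - f̄², dh̃₀/dt = -h̃₀ ṽ_y with initial data ṽ₀(0) = ṽ_x(0) = ṽ_y(0) = 0 and h̃₀(0) = h₀; in particular ṽ_y(t) → -∞ as t → π/(2f̄)⁻. -/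
open Real

/-- The explicit functions solve the reduced ODE system for Condition IV on
[0, π/(2f̄)) with the stated initial data, and ṽ_y blows up to -∞ as t → π/(2f̄)⁻. -/
theorem stmt_9 (fbar h₀ : ℝ) (hf : 0 < fbar)
    (v₀ vx vy hh₀ : ℝ → ℝ)
    (hv₀ : ∀ t, v₀ t = 0) (hvx : ∀ t, vx t = 0)
    (hvy : ∀ t, vy t = -fbar * Real.tan (fbar * t))
    (hhh₀ : ∀ t, hh₀ t = h₀ * (1 / Real.cos (fbar * t))) :
    (∀ t ∈ Set.Ico (0 : ℝ) (Real.pi / (2 * fbar)),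
      deriv v₀ t = -(v₀ t) * vy t ∧
      deriv vx t = -(vx t) * vy t ∧
      deriv vy t = -fbar * vx t - (vy t) ^ 2 - fbar ^ 2 ∧
      deriv hh₀ t = -(hh₀ t) * vy t) ∧
    (v₀ 0 = 0 ∧ vx 0 = 0 ∧ vy 0 = 0 ∧ hh₀ 0 = h₀) ∧
    Filter.Tendsto vy (nhdsWithin (Real.pi / (2 * fbar)) (Set.Iio (Real.pi / (2 * fbar))))
      Filter.atBot := by
  have hv₀' : v₀ = fun _ => (0 : ℝ) := funext hv₀
  have hvx' : vx = fun _ => (0 : ℝ) := funext hvx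
  have hvy' : vy = fun t => -fbar * Real.tan (fbar * t) := funext hvy
  have hhh₀' : hh₀ = fun t => h₀ * (1 / Real.cos (fbar * t)) := funext hhh₀
  refine ⟨?_, ?_, ?_⟩
  · intro t ht
    obtain ⟨ht0, ht1⟩ := ht
    have hcos : Real.cos (fbar * t) ≠ 0 := by
      have h1 : fbar * t < π / 2 := by
        have := (lt_div_iff₀ (by positivity : (0:ℝ) < 2 * fbar)).mp ht1
        nlinarith
      have h2 : -(π / 2) < fbar * t := by
        have := Real.pi_pos; nlinarith [mul_nonneg hf.le ht0]
      exact (Real.cos_pos_of_mem_Ioo ⟨h2, h1⟩).ne'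
    have hid : HasDerivAt (fun t : ℝ => fbar * t) fbar t := by
      simpa using (hasDerivAt_id t).const_mul fbar
    have htan : HasDerivAt (fun t : ℝ => Real.tan (fbar * t))
        (1 / Real.cos (fbar * t) ^ 2 * fbar) t :=
      (Real.hasDerivAt_tan hcos).comp t hid
    have hvyD : HasDerivAt vy (-fbar * (1 / Real.cos (fbar * t) ^ 2 * fbar)) t := by
      rw [hvy']; exact htan.const_mul (-fbar)
    have hcosD : HasDerivAt (fun t : ℝ => Real.cos (fbar * t))
        (-Real.sin (fbar * t) * fbar) t := (Real.hasDerivAt_cos (fbar * t)).comp t hid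
    have hhD : HasDerivAt hh₀
        (h₀ * (-(-Real.sin (fbar * t) * fbar) / Real.cos (fbar * t) ^ 2)) t := by
      rw [hhh₀']
      simp only [one_div]
      exact (hcosD.inv hcos).const_mul h₀
    constructor
    · simp [hv₀']
    constructor
    · simp [hvx']
    constructor
    · rw [hvyD.deriv, hvx t, hvy t, Real.tan_eq_sin_div_cos]
      field_simp
      linear_combination fbar * Real.sin_sq_add_cos_sq (fbar * t)
    · rw [hhD.deriv, hhh₀ t, hvy t, Real.tan_eq_sin_div_cos]
      field_simp
  · refine ⟨hv₀ 0, hvx 0, ?_, ?_⟩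
    · rw [hvy 0]; simp
    · rw [hhh₀ 0]; simp
  · rw [hvy']
    have hmap : Filter.Tendsto (fun t : ℝ => fbar * t)
        (nhdsWithin (π / (2 * fbar)) (Set.Iio (π / (2 * fbar))))
        (nhdsWithin (π / 2) (Set.Iio (π / 2))) := by
      apply tendsto_nhdsWithin_of_tendsto_nhds_of_eventually_within
      · have h2 : fbar * (π / (2 * fbar)) = π / 2 := by field_simp
        rw [← h2]
        exact ((continuous_const.mul continuous_id).tendsto _).mono_left nhdsWithin_le_nhds
      · filter_upwards [self_mem_nhdsWithin] with x hx
        simp only [Set.mem_Iio] at hx ⊢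
        calc fbar * x < fbar * (π / (2 * fbar)) := mul_lt_mul_of_pos_left hx hf
          _ = π / 2 := by field_simp
    have htan : Filter.Tendsto (fun t : ℝ => Real.tan (fbar * t))
        (nhdsWithin (π / (2 * fbar)) (Set.Iio (π / (2 * fbar)))) Filter.atTop :=
      Real.tendsto_tan_pi_div_two.comp hmap
    have := Filter.Tendsto.const_mul_atTop_of_neg (by linarith : -fbar < 0) htan
    simpa using this
end
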